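/- For every finite connected simple graph G with n ≥ 3 vertices and at most 3n − 6 edges (a bound satisfied by every simple planar graph on n ≥ 3 vertices), the number of spanning trees satisfies T(G) < 6ⁿ. -/

import Mathlib

open SimpleGraph

/-- The edge set `s ⊆ E(G)` spans a tree: the graph on `V` with edge set `s` is
connected and acyclic. -/
def IsSpanningTreeEdgeSet {V : Type*} (G : SimpleGraph V) (s : Set (Sym2 V)) : Prop :=
  s ⊆ G.edgeSet ∧ (SimpleGraph.fromEdgeSet s).Connected ∧
    (SimpleGraph.fromEdgeSet s).IsAcyclic

noncomputable def treeParent {V : Type*} {T : SimpleGraph V} (hT : T.IsTree) (r v : V) : V :=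
  ((hT.existsUnique_path v r).exists.choose).getVert 1

lemma treeParent_eq {V : Type*} {T : SimpleGraph V} (hT : T.IsTree) {r v : V}
    (p : T.Walk v r) (hp : p.IsPath) : treeParent hT r v = p.getVert 1 := by
  have h := hT.existsUnique_path v r
  have := h.unique hp h.exists.choose_spec
  rw [treeParent, ← this]

lemma treeParent_adj {V : Type*} {T : SimpleGraph V} (hT : T.IsTree) {r v : V}
    (hvr : v ≠ r) : T.Adj v (treeParent hT r v) := by
  have hp := (hT.existsUnique_path v r).exists.choose_spec
  exact Walk.adj_snd (Walk.not_nil_of_ne hvr)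

lemma treeParent_root {V : Type*} {T : SimpleGraph V} (hT : T.IsTree) (r : V) :
    treeParent hT r r = r := by
  rw [treeParent_eq hT Walk.nil Walk.IsPath.nil]
  rfl

lemma treeParent_edge {V : Type*} [DecidableEq V] {T : SimpleGraph V} (hT : T.IsTree) (r : V)
    {a b : V} (hab : T.Adj a b) :
    (a ≠ r ∧ treeParent hT r a = b) ∨ (b ≠ r ∧ treeParent hT r b = a) := by
  obtain ⟨q, hq, -⟩ := hT.existsUnique_path b r
  by_cases ha : a ∈ q.support
  · right
    have hq2 : (q.dropUntil a ha).IsPath := hq.dropUntil ha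
    have hb : b ∉ (q.dropUntil a ha).support := by
      intro hb
      rcases (Walk.mem_support_iff _).mp hb with rfl | hb'
      · exact hab.ne rfl
      · have hnodup := hq.support_nodup
        rw [← Walk.take_spec q ha, Walk.support_append, List.nodup_append] at hnodup
        exact hnodup.2.2 _ (Walk.start_mem_support _) _ hb' rfl
    have hpath : (Walk.cons hab.symm (q.dropUntil a ha)).IsPath := hq2.cons hb
    refine ⟨fun hbr => hb (hbr ▸ (q.dropUntil a ha).end_mem_support), ?_⟩
    rw [treeParent_eq hT _ hpath, Walk.getVert_cons_succ, Walk.getVert_zero]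
  · left
    have hpath : (Walk.cons hab q).IsPath := hq.cons ha
    refine ⟨fun har => ha (har ▸ q.end_mem_support), ?_⟩
    rw [treeParent_eq hT _ hpath, Walk.getVert_cons_succ, Walk.getVert_zero]

lemma edgeSet_of_spanning {V : Type*} {G : SimpleGraph V} {s : Set (Sym2 V)}
    (hsub : s ⊆ G.edgeSet) : (fromEdgeSet s).edgeSet = s := by
  rw [edgeSet_fromEdgeSet]
  ext e
  simp only [Set.mem_diff, Set.mem_setOf_eq, and_iff_left_iff_imp]
  exact fun he => G.not_isDiag_of_mem_edgeSet (hsub he)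

lemma spanning_recover {V : Type*} [DecidableEq V] {G : SimpleGraph V} {s : Set (Sym2 V)}
    (hs : IsSpanningTreeEdgeSet G s) (hT : (fromEdgeSet s).IsTree) (r : V) :
    s = {e | ∃ a, a ≠ r ∧ e = s(a, treeParent hT r a)} := by
  ext e
  constructor
  · intro he
    have he' : e ∈ (fromEdgeSet s).edgeSet := by
      rw [edgeSet_of_spanning hs.1]; exact he
    clear he
    revert he'
    induction e using Sym2.ind with
    | _ a b =>
      intro he'
      rw [mem_edgeSet _] at he'
      rcases treeParent_edge hT r he' with ⟨h1, h2⟩ | ⟨h1, h2⟩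
      · exact ⟨a, h1, by rw [h2]⟩
      · exact ⟨b, h1, by rw [h2, Sym2.eq_swap]⟩
  · rintro ⟨a, har, rfl⟩
    have h1 : (fromEdgeSet s).Adj a (treeParent hT r a) := treeParent_adj hT har
    have h2 : s(a, treeParent hT r a) ∈ (fromEdgeSet s).edgeSet := (mem_edgeSet _).mpr h1
    rwa [edgeSet_of_spanning hs.1] at h2

lemma prod_lt_pow_of_sum_lt {V : Type*} {t : Finset V} (d : V → ℕ) (ht : t.Nonempty)
    (h : ∑ v ∈ t, d v < 6 * t.card) : ∏ v ∈ t, d v < 6 ^ t.card := by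
  have hk : (0:ℝ) < (t.card : ℝ) := by exact_mod_cast ht.card_pos
  have key : (∏ v ∈ t, (d v : ℝ)) < 6 ^ t.card := by
    have hgm := Real.geom_mean_le_arith_mean_weighted t (fun _ => 1 / (t.card : ℝ))
      (fun v => (d v : ℝ)) (fun i _ => by positivity)
      (by rw [Finset.sum_const, nsmul_eq_mul]; field_simp) (fun i _ => by positivity)
    have havg : ∑ i ∈ t, (1 / (t.card : ℝ)) * (d i : ℝ) < 6 := by
      rw [← Finset.mul_sum]
      have hsum : (∑ v ∈ t, (d v : ℝ)) < 6 * t.card := by exact_mod_cast h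
      rw [div_mul_eq_mul_div, one_mul, div_lt_iff₀ hk]
      linarith
    have hgeo : (∏ v ∈ t, (d v : ℝ) ^ (1 / (t.card : ℝ))) < 6 := lt_of_le_of_lt hgm havg
    have hprod : (∏ v ∈ t, (d v : ℝ) ^ (1 / (t.card : ℝ))) ^ t.card = ∏ v ∈ t, (d v : ℝ) := by
      rw [← Finset.prod_pow]
      refine Finset.prod_congr rfl fun v _ => ?_
      rw [← Real.rpow_natCast ((d v : ℝ) ^ (1 / (t.card : ℝ))) t.card,
        ← Real.rpow_mul (by positivity), one_div_mul_cancel (ne_of_gt hk), Real.rpow_one]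
    rw [← hprod]
    exact pow_lt_pow_left₀ hgeo (Finset.prod_nonneg fun v _ => by positivity)
      (Finset.card_ne_zero_of_mem ht.choose_spec)
  exact_mod_cast key

/-- **Ribó Mor's proposition, part 2.** Every finite connected simple graph on `n ≥ 3`
vertices with at most `3n - 6` edges (as is every planar graph on `n ≥ 3` vertices) has
fewer than `6^n` spanning trees. -/
theorem spanning_trees_lt_six_pow
    {V : Type*} [Fintype V] [DecidableEq V]
    (G : SimpleGraph V) [DecidableRel G.Adj] (hconn : G.Connected)
    (hn : 3 ≤ Fintype.card V)
    (hedges : G.edgeFinset.card ≤ 3 * Fintype.card V - 6) :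
    {s : Set (Sym2 V) | IsSpanningTreeEdgeSet G s}.ncard < 6 ^ Fintype.card V := by
  classical
  set n := Fintype.card V with hn_def
  have hpos : 0 < n := by omega
  have hne : Nonempty V := Fintype.card_pos_iff.mp hpos
  obtain ⟨r⟩ := hne
  set A : Set (V → V) := {f | f r = r ∧ ∀ v, v ≠ r → G.Adj v (f v)} with hA
  set t : Finset V := Finset.univ.erase r with ht_def
  have htcard : t.card = n - 1 := by
    rw [ht_def, Finset.card_erase_of_mem (Finset.mem_univ r), Finset.card_univ]
  -- Step 1: inject spanning tree edge sets into A via the parent map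
  have hstep1 : {s : Set (Sym2 V) | IsSpanningTreeEdgeSet G s}.ncard ≤ A.ncard := by
    set Φ : Set (Sym2 V) → (V → V) := fun s =>
      if hs : IsSpanningTreeEdgeSet G s then treeParent ⟨hs.2.1, hs.2.2⟩ r else fun _ => r
      with hΦ
    refine Set.ncard_le_ncard_of_injOn Φ ?_ ?_ (Set.toFinite A)
    · intro s hs
      simp only [Set.mem_setOf_eq] at hs
      have hΦs : Φ s = treeParent ⟨hs.2.1, hs.2.2⟩ r := by rw [hΦ]; exact dif_pos hs
      rw [hA]
      refine ⟨by rw [hΦs]; exact treeParent_root _ r, fun v hv => ?_⟩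
      rw [hΦs]
      have h1 : (fromEdgeSet s).Adj v (treeParent ⟨hs.2.1, hs.2.2⟩ r v) :=
        treeParent_adj _ hv
      have h2 : s(v, treeParent ⟨hs.2.1, hs.2.2⟩ r v) ∈ (fromEdgeSet s).edgeSet :=
        (mem_edgeSet _).mpr h1
      rw [edgeSet_of_spanning hs.1] at h2
      exact (mem_edgeSet _).mp (hs.1 h2)
    · intro s1 hs1 s2 hs2 heq
      simp only [Set.mem_setOf_eq] at hs1 hs2
      rw [hΦ] at heq
      simp only [dif_pos hs1, dif_pos hs2] at heq
      rw [spanning_recover hs1 ⟨hs1.2.1, hs1.2.2⟩ r,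
        spanning_recover hs2 ⟨hs2.2.1, hs2.2.2⟩ r, heq]
  -- Step 2: |A| is at most the product of degrees over non-root vertices
  have hstep2 : A.ncard ≤ ∏ v ∈ t, G.degree v := by
    rw [← Nat.card_coe_set_eq]
    have hinj : Nat.card A ≤ Nat.card (∀ v : {v : V // v ≠ r}, G.neighborSet v.1) := by
      refine Nat.card_le_card_of_injective
        (fun f v => (⟨f.1 v.1, f.2.2 v.1 v.2⟩ : G.neighborSet v.1)) ?_
      intro f g hfg
      apply Subtype.ext; funext v
      by_cases hv : v = r
      · rw [hv, f.2.1, g.2.1]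
      · exact congrArg Subtype.val (congrFun hfg ⟨v, hv⟩)
    refine hinj.trans ?_
    rw [Nat.card_pi]
    have : ∀ v : {v : V // v ≠ r}, Nat.card (G.neighborSet v.1) = G.degree v.1 := fun v => by
      rw [Nat.card_eq_fintype_card, card_neighborSet_eq_degree]
    rw [Finset.prod_congr rfl fun v _ => this v,
      ← Finset.prod_subtype t (fun x => by simp [ht_def]) (fun v => G.degree v)]
  -- Step 3: the product of degrees is less than 6 ^ (n-1)
  have hsum : ∑ v ∈ t, G.degree v < 6 * t.card := by
    have h1 : ∑ v ∈ t, G.degree v ≤ ∑ v, G.degree v :=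
      Finset.sum_le_sum_of_subset (Finset.erase_subset _ _)
    have h2 := G.sum_degrees_eq_twice_card_edges
    omega
  have htne : t.Nonempty := Finset.card_pos.mp (by omega)
  have hstep3 : ∏ v ∈ t, G.degree v < 6 ^ t.card :=
    prod_lt_pow_of_sum_lt _ htne hsum
  calc {s : Set (Sym2 V) | IsSpanningTreeEdgeSet G s}.ncard
      ≤ A.ncard := hstep1
    _ ≤ ∏ v ∈ t, G.degree v := hstep2
    _ < 6 ^ t.card := hstep3
    _ < 6 ^ n := Nat.pow_lt_pow_right (by norm_num) (by omega)
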